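/- In the 2-normed space ℝ² with 2-norm ‖(a₁,a₂),(b₁,b₂)‖ = |a₁b₂ − a₂b₁|, the sequence xₖ = (√k, √k) is statistically quasi-Cauchy, but its image under f(x₁,x₂) = (x₁², x₂²), namely (k, k), is not statistically quasi-Cauchy. Hence statistical sequential continuity does not imply statistical ward continuity. -/

import Mathlib

open Filter

/-- A 2-normed space: a real linear space with dim > 1 together with a 2-norm. -/
structure TwoNormedSpace (X : Type*) [AddCommGroup X] [Module ℝ X] : Type _ where
  toFun : X → X → ℝ
  one_lt_rank : 1 < Module.rank ℝ X
  eq_zero_iff : ∀ x y : X, toFun x y = 0 ↔ ¬ LinearIndependent ℝ ![x, y]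
  symm : ∀ x y : X, toFun x y = toFun y x
  smul_left : ∀ (α : ℝ) (x y : X), toFun (α • x) y = |α| * toFun x y
  add_right : ∀ x y z : X, toFun x (y + z) ≤ toFun x y + toFun x z

variable {X : Type*} [AddCommGroup X] [Module ℝ X]

/-- A sequence is statistically quasi-Cauchy w.r.t. a 2-norm `N`. -/
def StatQuasiCauchy (N : X → X → ℝ) (x : ℕ → X) : Prop :=
  ∀ ε > (0:ℝ), ∀ z : X, Tendsto
    (fun n => (((Finset.range n).filter (fun k => ε ≤ N (x (k+1) - x k) z)).card : ℝ) / n)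
    atTop (nhds 0)

/-- A sequence statistically converges to `L` w.r.t. a 2-norm `N`. -/
def StatConv (N : X → X → ℝ) (x : ℕ → X) (L : X) : Prop :=
  ∀ ε > (0:ℝ), ∀ z : X, Tendsto
    (fun n => (((Finset.range n).filter (fun k => ε ≤ N (x k - L) z)).card : ℝ) / n)
    atTop (nhds 0)

/-- A sequence converges to `L` w.r.t. a 2-norm `N`. -/
def ConvTo (N : X → X → ℝ) (x : ℕ → X) (L : X) : Prop :=
  ∀ z : X, Tendsto (fun n => N (x n - L) z) atTop (nhds 0)

/-- A sequence is quasi-Cauchy w.r.t. a 2-norm `N`. -/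
def QuasiCauchy (N : X → X → ℝ) (x : ℕ → X) : Prop :=
  ∀ z : X, Tendsto (fun n => N (x (n+1) - x n) z) atTop (nhds 0)

/-- A subset `E` is statistically ward compact w.r.t. a 2-norm `N`. -/
def StatWardCompact (N : X → X → ℝ) (E : Set X) : Prop :=
  ∀ x : ℕ → X, (∀ n, x n ∈ E) → ∃ φ : ℕ → ℕ, StrictMono φ ∧ StatQuasiCauchy N (x ∘ φ)

/-- `f` is statistically ward continuous on `E` w.r.t. a 2-norm `N`. -/
def StatWardContinuousOn (N : X → X → ℝ) (f : X → X) (E : Set X) : Prop :=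
  ∀ x : ℕ → X, (∀ n, x n ∈ E) → StatQuasiCauchy N x → StatQuasiCauchy N (fun n => f (x n))

/-- The standard 2-norm on `ℝ²`: the area of the parallelogram spanned by `a` and `b`. -/
def N2 : ℝ × ℝ → ℝ × ℝ → ℝ := fun a b => |a.1 * b.2 - a.2 * b.1|

lemma qc_to_sqc (N : X → X → ℝ) (x : ℕ → X) (h : QuasiCauchy N x) :
    StatQuasiCauchy N x := by
  intro ε hε z
  have h2 := (h z).eventually (eventually_lt_nhds hε)
  obtain ⟨K, hK⟩ := eventually_atTop.mp h2
  have hcard : ∀ n : ℕ, (((Finset.range n).filter (fun k => ε ≤ N (x (k+1) - x k) z)).card : ℝ)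
      ≤ K := by
    intro n
    have hsub : ((Finset.range n).filter (fun k => ε ≤ N (x (k+1) - x k) z)) ⊆
        Finset.range K := by
      intro k hk
      simp only [Finset.mem_filter, Finset.mem_range] at hk ⊢
      by_contra hge
      exact absurd (hK k (not_lt.mp hge)) (not_lt.mpr hk.2)
    calc (((Finset.range n).filter (fun k => ε ≤ N (x (k+1) - x k) z)).card : ℝ)
        ≤ ((Finset.range K).card : ℝ) := by exact_mod_cast Finset.card_le_card hsub
      _ = K := by simp
  refine squeeze_zero (fun n => by positivity) (fun n => ?_)
    (tendsto_const_div_atTop_nhds_zero_nat (K:ℝ))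
  rcases Nat.eq_zero_or_pos n with rfl | hn
  · simp
  · exact div_le_div_of_nonneg_right (hcard n) n.cast_nonneg

lemma sqrt_qc : QuasiCauchy N2 (fun k : ℕ => (Real.sqrt k, Real.sqrt k)) := by
  intro z
  have hc : Tendsto (fun k : ℕ => Real.sqrt (k+1) - Real.sqrt k) atTop (nhds 0) := by
    have hg : Tendsto (fun k : ℕ => 1 / Real.sqrt k) atTop (nhds 0) := by
      have : Tendsto (fun k : ℕ => Real.sqrt k) atTop atTop := by
        apply tendsto_atTop_atTop.mpr
        intro b
        refine ⟨⌈b⌉₊^2, fun k hk => ?_⟩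
        have hb : b ≤ Real.sqrt ((⌈b⌉₊:ℝ)^2) := by
          rw [Real.sqrt_sq (Nat.cast_nonneg _)]; exact Nat.le_ceil b
        refine hb.trans (Real.sqrt_le_sqrt ?_)
        exact_mod_cast hk
      simp only [one_div]; exact this.inv_tendsto_atTop
    refine squeeze_zero' (Eventually.of_forall fun k =>
      sub_nonneg.mpr (Real.sqrt_le_sqrt (by push_cast; linarith))) ?_ hg
    filter_upwards [eventually_ge_atTop 1] with k hk
    have hs : (0:ℝ) < Real.sqrt k := Real.sqrt_pos.mpr (by positivity)
    have h1 : Real.sqrt (k:ℝ) ^ 2 = (k:ℝ) := Real.sq_sqrt (by positivity)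
    have h2 : Real.sqrt ((k:ℝ)+1) ^ 2 = (k:ℝ)+1 := Real.sq_sqrt (by positivity)
    have hle : Real.sqrt (k:ℝ) ≤ Real.sqrt ((k:ℝ)+1) := Real.sqrt_le_sqrt (by linarith)
    rw [sub_le_iff_le_add, div_add' _ _ _ (ne_of_gt hs), le_div_iff₀ hs]
    push_cast
    nlinarith
  have heq : ∀ k : ℕ,
      N2 ((fun k : ℕ => (Real.sqrt k, Real.sqrt k)) (k+1) - (Real.sqrt k, Real.sqrt k)) z
      = |(Real.sqrt (k+1) - Real.sqrt k) * (z.2 - z.1)| := by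
    intro k
    simp only [N2, Prod.fst_sub, Prod.snd_sub]
    push_cast
    ring_nf
  have h0 : Tendsto (fun k : ℕ => |(Real.sqrt (k+1) - Real.sqrt k) * (z.2 - z.1)|)
      atTop (nhds 0) := by
    simpa using (hc.mul_const (z.2 - z.1)).abs
  refine h0.congr fun k => ?_
  rw [← heq k]

theorem stmt16 :
    StatQuasiCauchy N2 (fun k => (Real.sqrt k, Real.sqrt k)) ∧
    ¬ StatQuasiCauchy N2 (fun k => ((k : ℝ), (k : ℝ))) := by
  constructor
  · exact qc_to_sqc N2 _ sqrt_qc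
  · intro h
    have h1 := h 1 one_pos (0, 1)
    have heq : ∀ n : ℕ, (((Finset.range n).filter
        (fun k => (1:ℝ) ≤ N2 ((fun k : ℕ => ((k:ℝ), (k:ℝ))) (k+1) - ((k:ℝ), (k:ℝ))) (0,1))).card : ℝ) / n
        = (n : ℝ) / n := by
      intro n
      congr 2
      rw [Finset.filter_true_of_mem, Finset.card_range]
      intro k _
      simp only [N2, Prod.fst_sub, Prod.snd_sub]
      push_cast
      norm_num
    have h2 : Tendsto (fun n : ℕ => (n:ℝ)/n) atTop (nhds 0) := by
      refine h1.congr fun n => ?_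
      exact heq n
    have h3 : Tendsto (fun n : ℕ => (n:ℝ)/n) atTop (nhds 1) := by
      refine Tendsto.congr' ?_ tendsto_const_nhds
      filter_upwards [eventually_ge_atTop 1] with n hn
      rw [div_self (Nat.cast_ne_zero.mpr (by omega))]
    exact one_ne_zero (tendsto_nhds_unique h3 h2)
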